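/- Let Q be a privacy protocol on A with all entries of Q̃ positive. Then for every probability distribution p on A with all p_x ∈ (0,1) and every output y ∈ B, H(X | Y = y, P = p) / H(X | P = p) ≥ e^{-LDP(Q)}, where X ~ p and Y = Q(X). -/
import Mathlib

open Real

lemma aux_negMulLog_ratio {c p r : ℝ} (hc : 0 < c) (hc1 : c ≤ 1)
    (hp0 : 0 < p) (hp1 : p < 1) (hr0 : 0 ≤ r) (hr1 : r ≤ 1)
    (h1 : c * p ≤ r) (h2 : c * (1 - p) ≤ 1 - r) :
    c * Real.negMulLog p ≤ Real.negMulLog r := by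
  have hfp : 0 ≤ Real.negMulLog p := Real.negMulLog_nonneg hp0.le hp1.le
  rcases le_total r p with hrp | hpr
  · -- r = α • p + (1-α) • 0 with α = r/p ∈ [c,1]
    set α : ℝ := r / p with hα
    have hα0 : 0 ≤ α := div_nonneg hr0 hp0.le
    have hα1 : α ≤ 1 := (div_le_one hp0).mpr hrp
    have hαc : c ≤ α := (le_div_iff₀ hp0).mpr h1
    have hcc : α * Real.negMulLog p + (1 - α) * Real.negMulLog 0
        ≤ Real.negMulLog (α * p + (1 - α) * 0) :=
      Real.concaveOn_negMulLog.2 (by simp [Set.mem_Ici, hp0.le]) (by simp [Set.mem_Ici])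
        hα0 (by linarith) (by ring)
    have hxy : α * p + (1 - α) * (0:ℝ) = r := by
      simp only [mul_zero, add_zero, hα]
      exact div_mul_cancel₀ r hp0.ne'
    rw [hxy] at hcc
    simp only [Real.negMulLog_zero, mul_zero, add_zero] at hcc
    calc c * Real.negMulLog p ≤ α * Real.negMulLog p :=
          mul_le_mul_of_nonneg_right hαc hfp
      _ ≤ Real.negMulLog r := hcc
  · -- r = β • p + (1-β) • 1 with β = (1-r)/(1-p) ∈ [c,1]
    have h1p : 0 < 1 - p := by linarith
    set β : ℝ := (1 - r) / (1 - p) with hβ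
    have hβ0 : 0 ≤ β := div_nonneg (by linarith) h1p.le
    have hβ1 : β ≤ 1 := (div_le_one h1p).mpr (by linarith)
    have hβc : c ≤ β := (le_div_iff₀ h1p).mpr h2
    have hcc : β * Real.negMulLog p + (1 - β) * Real.negMulLog 1
        ≤ Real.negMulLog (β * p + (1 - β) * 1) :=
      Real.concaveOn_negMulLog.2 (by simp [Set.mem_Ici, hp0.le]) (by simp [Set.mem_Ici])
        hβ0 (by linarith) (by ring)
    have hxy : β * p + (1 - β) * (1:ℝ) = r := by
      simp only [mul_one, hβ]
      field_simp
      ring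
    rw [hxy] at hcc
    simp only [Real.negMulLog_one, mul_zero, add_zero] at hcc
    calc c * Real.negMulLog p ≤ β * Real.negMulLog p :=
          mul_le_mul_of_nonneg_right hβc hfp
      _ ≤ Real.negMulLog r := hcc

theorem stmt16 {A B : Type*} [Fintype A] [Fintype B] [Nonempty A] [Nonempty B]
    (Q : B → A → ℝ) (hQpos : ∀ y x, 0 < Q y x) (hcol : ∀ x, ∑ y, Q y x = 1)
    (p : A → ℝ) (hp : ∀ x, p x ∈ Set.Ioo (0:ℝ) 1) (hp1 : ∑ x, p x = 1)
    (y : B) :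
    Real.exp (-Real.log (Finset.univ.sup' Finset.univ_nonempty
        (fun t : B × A × A => Q t.1 t.2.1 / Q t.1 t.2.2)))
      ≤ (∑ x, Real.negMulLog (Q y x * p x / ∑ x', Q y x' * p x'))
          / (∑ x, Real.negMulLog (p x)) := by
  classical
  set f : B × A × A → ℝ := fun t => Q t.1 t.2.1 / Q t.1 t.2.2 with hf
  set M : ℝ := Finset.univ.sup' Finset.univ_nonempty f with hM
  obtain ⟨x0⟩ := ‹Nonempty A›
  have hM1 : 1 ≤ M := by
    have h : f (y, x0, x0) ≤ M := Finset.le_sup' f (Finset.mem_univ (y, x0, x0))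
    simp only [hf] at h
    rwa [div_self (hQpos y x0).ne'] at h
  have hM0 : 0 < M := by linarith
  have hratio : ∀ x x', Q y x' ≤ M * Q y x := by
    intro x x'
    have h := Finset.le_sup' f (Finset.mem_univ (y, x', x))
    simp only [hf] at h
    rw [div_le_iff₀ (hQpos y x)] at h
    linarith [h]
  set S : ℝ := ∑ x', Q y x' * p x' with hS
  have hS0 : 0 < S :=
    Finset.sum_pos (fun x _ => mul_pos (hQpos y x) (hp x).1) Finset.univ_nonempty
  have hSle : ∀ x, S ≤ M * Q y x := by
    intro x
    calc S = ∑ x', Q y x' * p x' := rfl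
      _ ≤ ∑ x', (M * Q y x) * p x' :=
          Finset.sum_le_sum (fun x' _ =>
            mul_le_mul_of_nonneg_right (hratio x x') (hp x').1.le)
      _ = (M * Q y x) * ∑ x', p x' := by rw [← Finset.mul_sum]
      _ = M * Q y x := by rw [hp1, mul_one]
  -- termwise bound
  have hterm : ∀ x, M⁻¹ * Real.negMulLog (p x) ≤ Real.negMulLog (Q y x * p x / S) := by
    intro x
    have hr0 : 0 ≤ Q y x * p x / S :=
      div_nonneg (mul_nonneg (hQpos y x).le (hp x).1.le) hS0.le
    have hterm_le : Q y x * p x ≤ S :=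
      Finset.single_le_sum (f := fun x' => Q y x' * p x')
        (fun x' _ => mul_nonneg (hQpos y x').le (hp x').1.le) (Finset.mem_univ x)
    have hr1 : Q y x * p x / S ≤ 1 := (div_le_one hS0).mpr hterm_le
    have h1 : M⁻¹ * p x ≤ Q y x * p x / S := by
      rw [le_div_iff₀ hS0]
      have := mul_le_mul_of_nonneg_left (hSle x)
        (mul_nonneg (inv_nonneg.mpr hM0.le) (hp x).1.le)
      have hMi : M⁻¹ * M = 1 := inv_mul_cancel₀ hM0.ne'
      nlinarith [this, (hp x).1.le, (hQpos y x).le]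
    have h2 : M⁻¹ * (1 - p x) ≤ 1 - Q y x * p x / S := by
      have hrest : S * M⁻¹ * (1 - p x) ≤ S - Q y x * p x := by
        have hsplit : S - Q y x * p x = ∑ x' ∈ Finset.univ.erase x, Q y x' * p x' := by
          rw [hS, ← Finset.add_sum_erase Finset.univ (fun x' => Q y x' * p x')
            (Finset.mem_univ x)]
          ring
        have hprest : ∑ x' ∈ Finset.univ.erase x, p x' = 1 - p x := by
          rw [← hp1, ← Finset.add_sum_erase Finset.univ p (Finset.mem_univ x)]
          ring
        rw [hsplit, ← hprest, Finset.mul_sum]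
        refine Finset.sum_le_sum (fun x' _ => ?_)
        have hq : S * M⁻¹ ≤ Q y x' := by
          have h := mul_le_mul_of_nonneg_right (hSle x') (inv_nonneg.mpr hM0.le)
          rwa [mul_comm M, mul_assoc, mul_inv_cancel₀ hM0.ne', mul_one] at h
        exact mul_le_mul_of_nonneg_right hq (hp x').1.le
      have heq : 1 - Q y x * p x / S = (S - Q y x * p x) / S := by
        field_simp
      rw [heq, le_div_iff₀ hS0]
      nlinarith [hrest]
    exact aux_negMulLog_ratio (inv_pos.mpr hM0) (by
        rw [inv_le_one_iff₀]; right; exact hM1)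
      (hp x).1 (hp x).2 hr0 hr1 h1 h2
  -- sum up
  have hD0 : 0 < ∑ x, Real.negMulLog (p x) := by
    refine Finset.sum_pos (fun x _ => ?_) Finset.univ_nonempty
    have hlog : Real.log (p x) < 0 := Real.log_neg (hp x).1 (hp x).2
    have : p x * Real.log (p x) < 0 := mul_neg_of_pos_of_neg (hp x).1 hlog
    simp only [Real.negMulLog, neg_mul]
    linarith
  have hsum : M⁻¹ * ∑ x, Real.negMulLog (p x)
      ≤ ∑ x, Real.negMulLog (Q y x * p x / S) := by
    rw [Finset.mul_sum]
    exact Finset.sum_le_sum (fun x _ => hterm x)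
  rw [Real.exp_neg, Real.exp_log hM0, le_div_iff₀ hD0]
  exact hsum
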